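/- Let q ∈ {1,2}, T > 0, K ∈ L∞(ℝ), and let U be a family of functions X ∈ L_q(ℝ) with ‖X‖_{L_q} ≤ 1 such that ∫_{|ω|>Ω} e^{qT|ω|}|X(iω)|^q dω → 0 as Ω → ∞ uniformly over X ∈ U. Then with V_γ as above, for every δ > 0 there exists γ > 0 such that ‖V_γ·K·X − K·X‖_{L_q} ≤ δ for all X ∈ U. -/

import Mathlib

open MeasureTheory

lemma zrw (T γ ω : ℝ) :
    -2 * (T : ℂ) * (Complex.I * ω) ^ 2 / ((γ : ℂ) + Complex.I * ω)
      = ((2 * T * ω ^ 2 : ℝ) : ℂ) / ((γ : ℂ) + Complex.I * ω) := by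
  have h : (Complex.I * (ω:ℂ)) ^ 2 = -((ω:ℂ) ^ 2) := by
    rw [mul_pow, Complex.I_sq]; ring
  rw [h]; push_cast; ring

lemma abs_denom (γ ω : ℝ) : γ ≤ norm ((γ : ℂ) + Complex.I * ω) := by
  have := Complex.abs_re_le_norm ((γ : ℂ) + Complex.I * ω)
  simp at this
  calc γ ≤ |γ| := le_abs_self γ
  _ ≤ _ := by simpa using this

lemma re_z_le (T γ ω : ℝ) (hT : 0 < T) (hγ : 0 < γ) :
    (-2 * (T : ℂ) * (Complex.I * ω) ^ 2 / ((γ : ℂ) + Complex.I * ω)).re ≤ T * |ω| := by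
  rw [zrw]
  set a : ℝ := 2 * T * ω ^ 2 with ha
  have hre : (((a:ℝ):ℂ) / ((γ:ℂ) + Complex.I * ω)).re = a * γ / (γ * γ + ω * ω) := by
    rw [Complex.div_re]; simp [Complex.normSq_apply]
  rw [hre]
  have hden : (0:ℝ) < γ * γ + ω * ω := by nlinarith [mul_pos hγ hγ, mul_self_nonneg ω]
  rw [div_le_iff₀ hden, ha]
  have h2 : 2 * γ * |ω| ≤ γ * γ + ω * ω := by nlinarith [sq_nonneg (γ - |ω|), sq_abs ω]
  calc 2 * T * ω ^ 2 * γ = T * |ω| * (2 * γ * |ω|) := by rw [← sq_abs ω]; ring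
  _ ≤ T * |ω| * (γ * γ + ω * ω) := by
      apply mul_le_mul_of_nonneg_left h2; positivity

lemma abs_z_le (T γ ω : ℝ) (hT : 0 < T) (hγ : 0 < γ) :
    norm (-2 * (T : ℂ) * (Complex.I * ω) ^ 2 / ((γ : ℂ) + Complex.I * ω)) ≤ 2 * T * ω ^ 2 / γ := by
  rw [zrw, norm_div]
  have h1 : norm ((2 * T * ω ^ 2 : ℝ) : ℂ) = 2 * T * ω ^ 2 := by
    rw [Complex.norm_real, Real.norm_of_nonneg]; positivity
  rw [h1]
  exact div_le_div_of_nonneg_left (by positivity) hγ (abs_denom γ ω)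

lemma Vglobal (T γ ω : ℝ) (hT : 0 < T) (hγ : 0 < γ) :
    norm (Complex.exp (-2 * (T : ℂ) * (Complex.I * ω) ^ 2 / ((γ : ℂ) + Complex.I * ω)) - 1)
      ≤ 2 * Real.exp (T * |ω|) := by
  have h1 := re_z_le T γ ω hT hγ
  calc norm _ ≤ norm (Complex.exp (-2 * (T : ℂ) * (Complex.I * ω) ^ 2 / ((γ : ℂ) + Complex.I * ω))) + norm (1:ℂ) := by
        apply norm_sub_le
  _ ≤ Real.exp (T * |ω|) + 1 := by
        rw [Complex.norm_exp, norm_one]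
        have := Real.exp_le_exp.2 h1
        linarith
  _ ≤ 2 * Real.exp (T * |ω|) := by
        have : (1:ℝ) ≤ Real.exp (T * |ω|) := Real.one_le_exp (by positivity)
        linarith

/-- Uniform version: for q ∈ {1,2}, T > 0, K ∈ L∞, and a family U of X ∈ L_q with
‖X‖_{L_q} ≤ 1 and uniformly vanishing weighted tails, for every δ > 0 there is a
single γ > 0 with ‖V_γKX − KX‖^q_{L_q} ≤ δ for all X ∈ U. -/
theorem stmt15 (q : ℕ) (hq : q = 1 ∨ q = 2) (T : ℝ) (hT : 0 < T)
    (K : ℝ → ℂ) (hKmeas : Measurable K) (B : ℝ) (hK : ∀ ω : ℝ, norm (K ω) ≤ B)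
    (U : Set (ℝ → ℂ))
    (hUmeas : ∀ X ∈ U, Measurable X)
    (hUnorm : ∀ X ∈ U, (∫ ω : ℝ, (norm (X ω)) ^ q) ≤ 1)
    (hUint : ∀ X ∈ U,
      Integrable (fun ω : ℝ => Real.exp ((q : ℝ) * T * |ω|) * (norm (X ω)) ^ q))
    (hUtail : ∀ ε > (0 : ℝ), ∃ Ω : ℝ, 0 < Ω ∧ ∀ X ∈ U,
      (∫ ω in {ω : ℝ | Ω < |ω|}, Real.exp ((q : ℝ) * T * |ω|) * (norm (X ω)) ^ q) ≤ ε) :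
    ∀ δ > (0 : ℝ), ∃ γ > (0 : ℝ), ∀ X ∈ U,
      (∫ ω : ℝ,
        (norm (Complex.exp (-2 * (T : ℂ) * (Complex.I * ω) ^ 2 / ((γ : ℂ) + Complex.I * ω))
            * K ω * X ω - K ω * X ω)) ^ q) ≤ δ := by
  intro δ hδ
  have hq1 : 1 ≤ q := by rcases hq with h | h <;> omega
  have hB : 0 ≤ B := le_trans (norm_nonneg _) (hK 0)
  have hB1 : (0:ℝ) < B + 1 := by linarith
  set C : ℝ := (2 * (B + 1)) ^ q with hC
  have hCpos : 0 < C := by positivity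
  obtain ⟨Ω, hΩpos, htail⟩ := hUtail (δ / (2 * C)) (by positivity)
  set ε : ℝ := min 1 (δ / (2 * (B + 1) ^ q)) with hε
  have hεpos : 0 < ε := lt_min one_pos (by positivity)
  have hεle1 : ε ≤ 1 := min_le_left _ _
  have hεle2 : ε ≤ δ / (2 * (B + 1) ^ q) := min_le_right _ _
  set γ : ℝ := max (2 * T * Ω ^ 2) (4 * T * Ω ^ 2 / ε) with hγdef
  have hγ : 0 < γ := lt_max_of_lt_left (by positivity)
  refine ⟨γ, hγ, ?_⟩
  intro X hX
  -- notation
  set V : ℝ → ℂ := fun ω =>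
    Complex.exp (-2 * (T : ℂ) * (Complex.I * ω) ^ 2 / ((γ : ℂ) + Complex.I * ω)) with hV
  set F : ℝ → ℝ := fun ω => (norm (V ω * K ω * X ω - K ω * X ω)) ^ q with hF
  set g : ℝ → ℝ := fun ω => Real.exp ((q : ℝ) * T * |ω|) * (norm (X ω)) ^ q with hg
  have hgint : Integrable g := hUint X hX
  have hgnn : ∀ ω, 0 ≤ g ω := fun ω => by positivity
  have hFnn : ∀ ω, 0 ≤ F ω := fun ω => by positivity
  -- factorization and pointwise bounds
  have hfac : ∀ ω, norm (V ω * K ω * X ω - K ω * X ω)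
      = norm (V ω - 1) * norm (K ω) * norm (X ω) := by
    intro ω
    have : V ω * K ω * X ω - K ω * X ω = (V ω - 1) * K ω * X ω := by ring
    rw [this, norm_mul, norm_mul]
  have hexpq : ∀ ω : ℝ, Real.exp ((q : ℝ) * T * |ω|) = (Real.exp (T * |ω|)) ^ q := by
    intro ω
    rw [← Real.exp_nat_mul]
    ring_nf
  have hglobal : ∀ ω, F ω ≤ C * g ω := by
    intro ω
    have h1 : norm (V ω * K ω * X ω - K ω * X ω)
        ≤ 2 * Real.exp (T * |ω|) * ((B + 1) * norm (X ω)) := by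
      rw [hfac]
      have h2 := Vglobal T γ ω hT hγ
      have h3 : norm (K ω) ≤ B + 1 := le_trans (hK ω) (by linarith)
      calc norm (V ω - 1) * norm (K ω) * norm (X ω)
          ≤ (2 * Real.exp (T * |ω|)) * (B + 1) * norm (X ω) := by
            apply mul_le_mul_of_nonneg_right _ (norm_nonneg _)
            exact mul_le_mul h2 h3 (norm_nonneg _) (by positivity)
      _ = 2 * Real.exp (T * |ω|) * ((B + 1) * norm (X ω)) := by ring
    have h4 : F ω ≤ (2 * Real.exp (T * |ω|) * ((B + 1) * norm (X ω))) ^ q :=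
      pow_le_pow_left₀ (norm_nonneg _) h1 q
    refine h4.trans (le_of_eq ?_)
    simp only [hg, hC]
    rw [hexpq ω]
    have h5 : 2 * Real.exp (T * |ω|) * ((B + 1) * norm (X ω))
        = (2 * (B + 1)) * (Real.exp (T * |ω|) * norm (X ω)) := by ring
    rw [h5, mul_pow, mul_pow, mul_pow]
  -- measurability
  have hdne : ∀ ω : ℝ, ((γ : ℂ) + Complex.I * ω) ≠ 0 := by
    intro ω h
    have := congrArg Complex.re h
    simp at this
    linarith
  have hVcont : Continuous V := by
    apply Continuous.cexp
    apply Continuous.div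
    · fun_prop
    · fun_prop
    · exact hdne
  have hXmeas := hUmeas X hX
  have hFmeas : Measurable F := by
    apply Measurable.pow_const
    exact continuous_norm.measurable.comp
      (((hVcont.measurable.mul hKmeas).mul hXmeas).sub (hKmeas.mul hXmeas))
  have hFint : Integrable F := by
    apply Integrable.mono' (hgint.const_mul C) hFmeas.aestronglyMeasurable
    filter_upwards with ω
    rw [Real.norm_of_nonneg (hFnn ω)]
    exact hglobal ω
  -- |X|^q integrable
  have hXqm : Measurable fun ω : ℝ => (norm (X ω)) ^ q := by
    apply Measurable.pow_const
    exact continuous_norm.measurable.comp hXmeas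
  have hXqint : Integrable (fun ω => (norm (X ω)) ^ q) := by
    apply Integrable.mono' hgint hXqm.aestronglyMeasurable
    filter_upwards with ω
    rw [Real.norm_of_nonneg (by positivity)]
    simp only [hg]
    have h1 : (1:ℝ) ≤ Real.exp ((q : ℝ) * T * |ω|) := Real.one_le_exp (by positivity)
    nlinarith [pow_nonneg (norm_nonneg (X ω)) q]
  -- the set
  set s : Set ℝ := {ω : ℝ | Ω < |ω|} with hs
  have hsm : MeasurableSet s := measurableSet_lt measurable_const measurable_abs
  -- small bound on sᶜ
  have hsmall : ∀ ω ∈ sᶜ, norm (V ω - 1) ≤ ε := by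
    intro ω hω
    simp only [hs, Set.mem_compl_iff, Set.mem_setOf_eq, not_lt] at hω
    have habs := abs_z_le T γ ω hT hγ
    have hω2 : ω ^ 2 ≤ Ω ^ 2 := by
      have := abs_nonneg ω
      nlinarith [sq_abs ω]
    have hb1 : 2 * T * ω ^ 2 / γ ≤ 2 * T * Ω ^ 2 / γ := by
      gcongr
    have hc1 : 2 * T * Ω ^ 2 / γ ≤ 1 := by
      rw [div_le_one hγ]
      exact le_max_left _ _
    have hc2 : 2 * T * Ω ^ 2 / γ ≤ ε / 2 := by
      have h5 : 4 * T * Ω ^ 2 / ε ≤ γ := le_max_right _ _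
      have h6 : 0 < 4 * T * Ω ^ 2 / ε := by positivity
      calc 2 * T * Ω ^ 2 / γ ≤ 2 * T * Ω ^ 2 / (4 * T * Ω ^ 2 / ε) :=
            div_le_div_of_nonneg_left (by positivity) h6 h5
      _ = ε / 2 := by field_simp; ring
    have hz1 : norm (-2 * (T : ℂ) * (Complex.I * ω) ^ 2 / ((γ : ℂ) + Complex.I * ω)) ≤ 1 :=
      habs.trans (hb1.trans hc1)
    have := Complex.norm_exp_sub_one_le hz1
    have hz2 : norm (-2 * (T : ℂ) * (Complex.I * ω) ^ 2 / ((γ : ℂ) + Complex.I * ω)) ≤ ε / 2 :=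
      habs.trans (hb1.trans hc2)
    calc norm (V ω - 1) ≤ 2 * norm (-2 * (T : ℂ) * (Complex.I * ω) ^ 2 / ((γ : ℂ) + Complex.I * ω)) := this
    _ ≤ 2 * (ε / 2) := by linarith
    _ = ε := by ring
  -- split the integral
  have hsplit : (∫ ω : ℝ, F ω) = (∫ ω in s, F ω) + (∫ ω in sᶜ, F ω) :=
    (integral_add_compl hsm hFint).symm
  -- tail bound
  have htailb : (∫ ω in s, F ω) ≤ δ / 2 := by
    have h1 : (∫ ω in s, F ω) ≤ ∫ ω in s, C * g ω := by
      apply setIntegral_mono_on hFint.integrableOn ((hgint.const_mul C).integrableOn) hsm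
      intro ω _
      exact hglobal ω
    have h2 : (∫ ω in s, C * g ω) = C * ∫ ω in s, g ω := integral_const_mul C _
    have h3 := htail X hX
    calc (∫ ω in s, F ω) ≤ C * ∫ ω in s, g ω := by rw [← h2]; exact h1
    _ ≤ C * (δ / (2 * C)) := by
        apply mul_le_mul_of_nonneg_left _ hCpos.le
        exact h3
    _ = δ / 2 := by field_simp
  -- inner bound
  have hinnerb : (∫ ω in sᶜ, F ω) ≤ δ / 2 := by
    have h1 : ∀ ω ∈ sᶜ, F ω ≤ ε * ((B + 1) ^ q * (norm (X ω)) ^ q) := by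
      intro ω hω
      have h2 : norm (V ω * K ω * X ω - K ω * X ω)
          ≤ ε * ((B + 1) * norm (X ω)) := by
        rw [hfac]
        have h3 : norm (K ω) ≤ B + 1 := le_trans (hK ω) (by linarith)
        calc norm (V ω - 1) * norm (K ω) * norm (X ω)
            ≤ ε * (B + 1) * norm (X ω) := by
              apply mul_le_mul_of_nonneg_right _ (norm_nonneg _)
              exact mul_le_mul (hsmall ω hω) h3 (norm_nonneg _) hεpos.le
        _ = ε * ((B + 1) * norm (X ω)) := by ring
      have h4 : F ω ≤ (ε * ((B + 1) * norm (X ω))) ^ q :=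
        pow_le_pow_left₀ (norm_nonneg _) h2 q
      refine h4.trans ?_
      rw [mul_pow, mul_pow]
      have hεq : ε ^ q ≤ ε := pow_le_of_le_one hεpos.le hεle1 (by omega)
      apply mul_le_mul_of_nonneg_right hεq
      positivity
    have h5 : (∫ ω in sᶜ, F ω) ≤ ∫ ω in sᶜ, ε * ((B + 1) ^ q * (norm (X ω)) ^ q) := by
      apply setIntegral_mono_on hFint.integrableOn
        (((hXqint.const_mul _).const_mul _).integrableOn) hsm.compl h1
    have h6 : (∫ ω in sᶜ, ε * ((B + 1) ^ q * (norm (X ω)) ^ q))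
        = ε * (B + 1) ^ q * ∫ ω in sᶜ, (norm (X ω)) ^ q := by
      rw [← integral_const_mul]
      congr 1
      ext ω
      ring
    have h7 : (∫ ω in sᶜ, (norm (X ω)) ^ q) ≤ 1 := by
      refine le_trans ?_ (hUnorm X hX)
      apply setIntegral_le_integral hXqint
      filter_upwards with ω
      positivity
    calc (∫ ω in sᶜ, F ω) ≤ ε * (B + 1) ^ q * ∫ ω in sᶜ, (norm (X ω)) ^ q := by
          rw [← h6]; exact h5
    _ ≤ ε * (B + 1) ^ q * 1 := by
        apply mul_le_mul_of_nonneg_left h7 (by positivity)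
    _ = ε * (B + 1) ^ q := by ring
    _ ≤ δ / 2 := by
        rw [hε]
        have h8 : (0:ℝ) < (B + 1) ^ q := by positivity
        calc min 1 (δ / (2 * (B + 1) ^ q)) * (B + 1) ^ q
            ≤ (δ / (2 * (B + 1) ^ q)) * (B + 1) ^ q := by
              apply mul_le_mul_of_nonneg_right (min_le_right _ _) h8.le
        _ = δ / 2 := by field_simp
  calc (∫ ω : ℝ, F ω) = (∫ ω in s, F ω) + (∫ ω in sᶜ, F ω) := hsplit
  _ ≤ δ / 2 + δ / 2 := add_le_add htailb hinnerb
  _ = δ := by ring
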